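/- Let G be a group and let A be a finite subset of G not containing the identity e. If the Cayley graph Cay(G,A) has exactly k components, where k is a positive integer, then G is generated by some set of exactly |A| + k − 1 elements; consequently, the rank of G (the minimum cardinality of a generating set of G) is at most |A| + k − 1. -/

import Mathlib

open scoped Pointwise

/-- The Cayley graph of a group `G` with respect to a subset `A`: distinct vertices
`u` and `v` are adjacent iff `u = v * a` or `v = u * a` for some `a ∈ A` with `a ≠ 1`
(equivalently, `u⁻¹ * v ∈ A` or `v⁻¹ * u ∈ A`). -/
def cayleyGraph {G : Type*} [Group G] (A : Set G) : SimpleGraph G where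
  Adj u v := u ≠ v ∧ (u⁻¹ * v ∈ A ∨ v⁻¹ * u ∈ A)
  symm := ⟨fun _ _ h => ⟨h.1.symm, h.2.symm⟩⟩
  loopless := ⟨fun _ h => h.1 rfl⟩

lemma cayley_adj_mem {G : Type*} [Group G] (A : Set G) {u v : G}
    (h : (cayleyGraph A).Adj u v) : u⁻¹ * v ∈ Subgroup.closure A := by
  rcases h.2 with h' | h'
  · exact Subgroup.subset_closure h'
  · have := (Subgroup.closure A).inv_mem (Subgroup.subset_closure h')
    simpa [mul_inv_rev] using this

lemma cayley_reachable_mul {G : Type*} [Group G] (A : Set G) (g : G) {x y : G}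
    (h : (cayleyGraph A).Reachable x y) :
    (cayleyGraph A).Reachable (g * x) (g * y) := by
  let φ : cayleyGraph A ≃g cayleyGraph A :=
    { toEquiv := Equiv.mulLeft g
      map_rel_iff' := by
        intro a b
        simp [cayleyGraph, mul_assoc, mul_inv_rev] }
  exact h.map φ.toHom

lemma cayley_reachable_iff {G : Type*} [Group G] (A : Set G) (he : (1 : G) ∉ A)
    (u v : G) :
    (cayleyGraph A).Reachable u v ↔ u⁻¹ * v ∈ Subgroup.closure A := by
  constructor
  · rintro ⟨w⟩
    induction w with
    | nil => simpa using (Subgroup.closure A).one_mem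
    | @cons a b c hab p ih =>
      have h1 := cayley_adj_mem A hab
      have := (Subgroup.closure A).mul_mem h1 ih
      simpa [mul_assoc] using this
  · intro hm
    have key : ∀ h ∈ Subgroup.closure A, (cayleyGraph A).Reachable 1 h := by
      intro h hh
      induction hh using Subgroup.closure_induction with
      | mem x hx =>
        refine SimpleGraph.Adj.reachable ⟨?_, Or.inl (by simpa using hx)⟩
        rintro rfl; exact he hx
      | one => exact SimpleGraph.Reachable.refl 1
      | mul x y hx hy ihx ihy =>
        exact ihx.trans (by simpa using cayley_reachable_mul A x ihy)
      | inv x hx ihx =>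
        simpa using (cayley_reachable_mul A x⁻¹ ihx).symm
    simpa using cayley_reachable_mul A u (key _ hm)

/-- If `A` is a finite subset of `G` not containing the identity and `Cay(G, A)` has
exactly `k` components (`k` positive), then `G` is generated by a set of exactly
`|A| + k - 1` elements; consequently the rank of `G`, the minimum cardinality of a
generating set, is at most `|A| + k - 1`. -/
theorem stmt_17 {G : Type*} [Group G] (A : Set G) (hA : A.Finite) (he : (1 : G) ∉ A)
    (k : ℕ) (hk : 0 < k)
    (hcomp : Nat.card ((cayleyGraph A).ConnectedComponent) = k) :
    (∃ X : Finset G, X.card = A.ncard + k - 1 ∧ Subgroup.closure (X : Set G) = ⊤) ∧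
    sInf {n : ℕ | ∃ X : Finset G, X.card = n ∧ Subgroup.closure (X : Set G) = ⊤}
      ≤ A.ncard + k - 1 := by
  classical
  haveI : DecidableEq (G ⧸ Subgroup.closure A) := Classical.decEq _
  set H := Subgroup.closure A with hH
  -- components biject with cosets
  have hwalk : ∀ (v w : G) (p : (cayleyGraph A).Walk v w), p.IsPath →
      (QuotientGroup.mk v : G ⧸ H) = QuotientGroup.mk w := by
    intro v w p _
    exact (QuotientGroup.eq).mpr ((cayley_reachable_iff A he v w).mp ⟨p⟩)
  let f : (cayleyGraph A).ConnectedComponent → G ⧸ H :=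
    SimpleGraph.ConnectedComponent.lift (fun g => (QuotientGroup.mk g : G ⧸ H)) hwalk
  have hbij : Function.Bijective f := by
    constructor
    · refine SimpleGraph.ConnectedComponent.ind₂ (fun u v h => ?_)
      have : u⁻¹ * v ∈ H := (QuotientGroup.eq).mp h
      exact SimpleGraph.ConnectedComponent.eq.mpr
        ((cayley_reachable_iff A he u v).mpr this)
    · intro q
      obtain ⟨g, rfl⟩ := QuotientGroup.mk_surjective q
      exact ⟨(cayleyGraph A).connectedComponentMk g, rfl⟩
  have hcardQ : Nat.card (G ⧸ H) = k := by
    rw [← Nat.card_eq_of_bijective f hbij, hcomp]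
  have hfinQ : Finite (G ⧸ H) := Nat.finite_of_card_ne_zero (by omega)
  have := Fintype.ofFinite (G ⧸ H)
  -- representatives of nontrivial cosets
  let R : Finset G :=
    (Finset.univ.erase (QuotientGroup.mk 1 : G ⧸ H)).image Quotient.out
  have hRcard : R.card = k - 1 := by
    rw [Finset.card_image_of_injective _ Quotient.out_injective,
      Finset.card_erase_of_mem (Finset.mem_univ _), Finset.card_univ,
      ← Nat.card_eq_fintype_card]
    exact congrArg (· - 1) (hcardQ : Nat.card (Quotient (QuotientGroup.leftRel H)) = k)
  have hRnotH : ∀ r ∈ R, r ∉ H := by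
    intro r hr hrH
    obtain ⟨q, hq, rfl⟩ := Finset.mem_image.mp hr
    have h1 : (QuotientGroup.mk 1 : G ⧸ H) = QuotientGroup.mk q.out :=
      (QuotientGroup.eq).mpr (by simpa using hrH)
    rw [QuotientGroup.out_eq'] at h1
    exact (Finset.mem_erase.mp hq).1 h1.symm
  let X : Finset G := hA.toFinset ∪ R
  have hdisj : Disjoint hA.toFinset R := by
    rw [Finset.disjoint_left]
    intro a ha haR
    exact hRnotH a haR (Subgroup.subset_closure (hA.mem_toFinset.mp ha))
  have hXcard : X.card = A.ncard + k - 1 := by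
    rw [Finset.card_union_of_disjoint hdisj, hRcard,
      Set.ncard_eq_toFinset_card A hA]
    omega
  have hXtop : Subgroup.closure (X : Set G) = ⊤ := by
    rw [eq_top_iff]
    intro g _
    have hHle : H ≤ Subgroup.closure (X : Set G) := by
      rw [hH]
      apply Subgroup.closure_mono
      intro a ha
      exact Finset.mem_coe.mpr (Finset.mem_union_left _ (hA.mem_toFinset.mpr ha))
    by_cases hq : (QuotientGroup.mk g : G ⧸ H) = QuotientGroup.mk 1
    · have : (1:G)⁻¹ * g ∈ H := (QuotientGroup.eq).mp hq.symm
      exact hHle (by simpa using this)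
    · set q : G ⧸ H := QuotientGroup.mk g with hqdef
      have hrX : q.out ∈ X := by
        apply Finset.mem_union_right
        refine Finset.mem_image.mpr ⟨q, Finset.mem_erase.mpr ⟨?_, Finset.mem_univ _⟩, rfl⟩
        exact fun h => hq (hqdef ▸ h)
      have hmem : (q.out)⁻¹ * g ∈ H := by
        apply (QuotientGroup.eq).mp
        rw [QuotientGroup.out_eq']
      have : g = q.out * ((q.out)⁻¹ * g) := by group
      rw [this]
      exact Subgroup.mul_mem _ (Subgroup.subset_closure hrX) (hHle hmem)
  refine ⟨⟨X, hXcard, hXtop⟩, Nat.sInf_le ⟨X, hXcard, hXtop⟩⟩
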